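/- (Lemma 2.) For any ε ∈ EuclideanSpace ℝ (Fin n) with εᵢ ∈ {−1,1} for all i, and any y ∈ EuclideanSpace ℝ (Fin n), let S = {i : Real.sign(yᵢ) ≠ εᵢ} be the set of coordinates where y and ε have different sign. Then ‖y − (⟪y, ε⟫/‖ε‖²)·ε‖² ≥ (min(#S, n − #S)/n)·‖y‖². -/

import Mathlib

open scoped RealInnerProductSpace

/-- **Lemma 2.** If `ε` has `±1` entries and `S` is the set of
coordinates where the sign of `y` disagrees with `ε`, then the component of `y`
orthogonal to `ε` has squared norm at least `min(#S, n - #S)/n · ‖y‖²`. -/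
theorem sq_norm_orthogonal_component_ge_of_sign_mismatch {n : ℕ} (hn : 0 < n)
    (ε : EuclideanSpace ℝ (Fin n)) (hε : ∀ i, ε i = -1 ∨ ε i = 1)
    (y : EuclideanSpace ℝ (Fin n)) (S : Finset (Fin n))
    (hS : ∀ i, i ∈ S ↔ Real.sign (y i) ≠ ε i) :
    ‖y - ((⟪y, ε⟫ / ‖ε‖ ^ 2) • ε)‖ ^ 2
      ≥ ((min S.card (n - S.card) : ℕ) : ℝ) / n * ‖y‖ ^ 2 := by
  classical
  have hn' : (0:ℝ) < n := by exact_mod_cast hn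
  -- εᵢ² = 1
  have hε2 : ∀ i, ε i * ε i = 1 := by
    intro i; rcases hε i with h | h <;> rw [h] <;> ring
  have hεε : ⟪ε, ε⟫ = (n : ℝ) := by
    simp only [PiLp.inner_apply, RCLike.inner_apply, conj_trivial]
    simp [hε2]
  have hnormε : ‖ε‖ ^ 2 = (n : ℝ) := by
    rw [← real_inner_self_eq_norm_sq, hεε]
  have hyy : ‖y‖ ^ 2 = ∑ i, y i ^ 2 := by
    rw [← real_inner_self_eq_norm_sq]
    simp only [PiLp.inner_apply, RCLike.inner_apply, conj_trivial]
    exact Finset.sum_congr rfl fun i _ => (sq (y i)).symm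
  have hyε : ⟪y, ε⟫ = ∑ i, y i * ε i := by
    simp only [PiLp.inner_apply, RCLike.inner_apply, conj_trivial]
    exact Finset.sum_congr rfl fun i _ => mul_comm _ _
  -- sign facts
  have hmemS : ∀ i ∈ S, y i * ε i ≤ 0 := by
    intro i hi
    have h := (hS i).mp hi
    rcases hε i with h1 | h1 <;> rw [h1] at h ⊢
    · rcases lt_trichotomy (y i) 0 with hy | hy | hy
      · exact absurd (Real.sign_of_neg hy) h
      · simp [hy]
      · nlinarith
    · rcases lt_trichotomy (y i) 0 with hy | hy | hy
      · nlinarith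
      · simp [hy]
      · exact absurd (Real.sign_of_pos hy) h
  have hnotS : ∀ i ∉ S, y i * ε i = |y i| := by
    intro i hi
    have h : Real.sign (y i) = ε i := not_not.mp ((hS i).not.mp hi)
    rcases hε i with h1 | h1 <;> rw [h1] at h ⊢
    · have hy : y i < 0 := by
        rcases lt_trichotomy (y i) 0 with hy | hy | hy
        · exact hy
        · rw [hy, Real.sign_zero] at h; norm_num at h
        · rw [Real.sign_of_pos hy] at h; norm_num at h
      rw [abs_of_neg hy]; ring
    · have hy : 0 < y i := by
        rcases lt_trichotomy (y i) 0 with hy | hy | hy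
        · rw [Real.sign_of_neg hy] at h; norm_num at h
        · rw [hy, Real.sign_zero] at h; norm_num at h
        · exact hy
      rw [abs_of_pos hy]; ring
  -- Cauchy–Schwarz on subsets
  have hCS : ∀ T : Finset (Fin n), (∑ i ∈ T, |y i|) ^ 2 ≤ (T.card : ℝ) * ‖y‖ ^ 2 := by
    intro T
    calc (∑ i ∈ T, |y i|) ^ 2 ≤ (T.card : ℝ) * ∑ i ∈ T, |y i| ^ 2 :=
          sq_sum_le_card_mul_sum_sq
      _ ≤ (T.card : ℝ) * ‖y‖ ^ 2 := by
          apply mul_le_mul_of_nonneg_left _ (Nat.cast_nonneg _)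
          rw [hyy]
          simp only [sq_abs]
          exact Finset.sum_le_sum_of_subset_of_nonneg (Finset.subset_univ T)
            (fun i _ _ => sq_nonneg _)
  -- bounds on ⟪y, ε⟫
  have hsplit : ⟪y, ε⟫ = (∑ i ∈ S, y i * ε i) + ∑ i ∈ Sᶜ, y i * ε i := by
    rw [hyε, ← Finset.sum_add_sum_compl S]
  have hub : ⟪y, ε⟫ ≤ ∑ i ∈ Sᶜ, |y i| := by
    rw [hsplit]
    have h1 : (∑ i ∈ S, y i * ε i) ≤ 0 :=
      Finset.sum_nonpos fun i hi => hmemS i hi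
    have h2 : (∑ i ∈ Sᶜ, y i * ε i) = ∑ i ∈ Sᶜ, |y i| :=
      Finset.sum_congr rfl fun i hi => hnotS i (Finset.mem_compl.mp hi)
    linarith
  have hlb : -(∑ i ∈ S, |y i|) ≤ ⟪y, ε⟫ := by
    rw [hsplit]
    have h1 : -(∑ i ∈ S, |y i|) ≤ ∑ i ∈ S, y i * ε i := by
      rw [← Finset.sum_neg_distrib]
      refine Finset.sum_le_sum fun i _ => ?_
      have := neg_abs_le (y i * ε i)
      rcases hε i with h | h <;> rw [h] at this ⊢ <;>
        [skip; skip] <;> simp only [mul_neg, mul_one, abs_neg] at this ⊢ <;> linarith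
    have h2 : (0:ℝ) ≤ ∑ i ∈ Sᶜ, y i * ε i := by
      rw [Finset.sum_congr rfl fun i hi => hnotS i (Finset.mem_compl.mp hi)]
      exact Finset.sum_nonneg fun i _ => abs_nonneg _
    linarith
  -- key: ⟪y,ε⟫² ≤ (n - m) ‖y‖²
  set m : ℕ := min S.card (n - S.card) with hm
  have hcard : S.card ≤ n := by
    simpa using Finset.card_le_card (Finset.subset_univ S)
  have hccard : Sᶜ.card = n - S.card := by
    rw [Finset.card_compl]; simp
  have hkey : ⟪y, ε⟫ ^ 2 ≤ ((n - m : ℕ) : ℝ) * ‖y‖ ^ 2 := by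
    rcases le_or_gt 0 ⟪y, ε⟫ with h | h
    · calc ⟪y, ε⟫ ^ 2 ≤ (∑ i ∈ Sᶜ, |y i|) ^ 2 := by
            apply pow_le_pow_left₀ h hub
        _ ≤ (Sᶜ.card : ℝ) * ‖y‖ ^ 2 := hCS Sᶜ
        _ ≤ ((n - m : ℕ) : ℝ) * ‖y‖ ^ 2 := by
            apply mul_le_mul_of_nonneg_right _ (sq_nonneg _)
            have : Sᶜ.card ≤ n - m := by
              rw [hccard, hm]; omega
            exact_mod_cast this
    · calc ⟪y, ε⟫ ^ 2 ≤ (∑ i ∈ S, |y i|) ^ 2 := by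
            have hsq : ⟪y, ε⟫ ^ 2 = (-⟪y, ε⟫) ^ 2 := by ring
            rw [hsq]
            apply pow_le_pow_left₀ (by linarith) (by linarith)
        _ ≤ (S.card : ℝ) * ‖y‖ ^ 2 := hCS S
        _ ≤ ((n - m : ℕ) : ℝ) * ‖y‖ ^ 2 := by
            apply mul_le_mul_of_nonneg_right _ (sq_nonneg _)
            have : S.card ≤ n - m := by omega
            exact_mod_cast this
  -- expand the norm
  have hexpand : ‖y - ((⟪y, ε⟫ / ‖ε‖ ^ 2) • ε)‖ ^ 2
      = ‖y‖ ^ 2 - ⟪y, ε⟫ ^ 2 / n := by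
    rw [norm_sub_sq_real, real_inner_smul_right, norm_smul, hnormε,
      Real.norm_eq_abs, mul_pow, sq_abs, hnormε]
    field_simp
    ring
  rw [hexpand, ge_iff_le]
  have hmn : (m : ℝ) ≤ n := by
    have : m ≤ n := by omega
    exact_mod_cast this
  have hsub : ((n - m : ℕ) : ℝ) = (n : ℝ) - m := by
    have : m ≤ n := by omega
    exact Nat.cast_sub this
  rw [hsub] at hkey
  rw [div_mul_eq_mul_div, div_le_iff₀ hn']
  have hc : ⟪y, ε⟫ ^ 2 / (n : ℝ) * n = ⟪y, ε⟫ ^ 2 := div_mul_cancel₀ _ (ne_of_gt hn')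
  nlinarith [hkey]
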